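/- Let A be an element of a real Banach algebra with unit, and suppose A² = -1 + r with ‖r‖ < 1, where r commutes with A. Define f = A·((1-r)^{-1/2} - 1), where (1-r)^{-1/2} is given by the binomial power series 1 + Σ_{n≥1} c_n rⁿ. Then (A + f)² = -1 and ‖f‖ ≤ ‖A‖·((1-‖r‖)^{-1/2} - 1). -/

import Mathlib

/-- Coefficients of the binomial series of `(1-x)^{-1/2}`:
`c n = (2n choose n) / 4^n`, with `c 0 = 1`. -/
noncomputable def invSqrtCoeff (n : ℕ) : ℝ := (Nat.choose (2 * n) n : ℝ) / 4 ^ n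

namespace StmtAux

open Finset

noncomputable def a (n : ℕ) : ℝ := Nat.centralBinom n

lemma a_nonneg (n : ℕ) : 0 ≤ a n := Nat.cast_nonneg _

lemma a_zero : a 0 = 1 := by simp [a, Nat.centralBinom]

lemma a_rec (k : ℕ) : ((k : ℝ) + 1) * a (k + 1) = 2 * (2 * k + 1) * a k := by
  have h := Nat.succ_mul_centralBinom_succ k
  simp only [a]
  exact_mod_cast h

lemma double_weighted (m : ℕ) :
    2 * ∑ k ∈ range (m + 1), (k : ℝ) * (a k * a (m - k))
      = m * ∑ k ∈ range (m + 1), a k * a (m - k) := by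
  have hrefl : ∑ k ∈ range (m + 1), ((m - k : ℕ) : ℝ) * (a k * a (m - k))
      = ∑ k ∈ range (m + 1), (k : ℝ) * (a k * a (m - k)) := by
    rw [← Finset.sum_range_reflect (fun k => (k : ℝ) * (a k * a (m - k))) (m + 1)]
    refine Finset.sum_congr rfl fun j hj => ?_
    have hj' : j ≤ m := by
      have := Finset.mem_range.1 hj; omega
    have h1 : m + 1 - 1 - j = m - j := by omega
    rw [h1, Nat.sub_sub_self hj', mul_comm (a (m - j)) (a j)]
  have : 2 * ∑ k ∈ range (m + 1), (k : ℝ) * (a k * a (m - k))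
      = ∑ k ∈ range (m + 1), ((k : ℝ) + ((m - k : ℕ) : ℝ)) * (a k * a (m - k)) := by
    rw [two_mul]
    nth_rewrite 2 [← hrefl]
    rw [← Finset.sum_add_distrib]
    exact Finset.sum_congr rfl fun k _ => by ring
  rw [this, Finset.mul_sum]
  refine Finset.sum_congr rfl fun k hk => ?_
  have hk' : k ≤ m := by have := Finset.mem_range.1 hk; omega
  rw [Nat.cast_sub hk']; ring

lemma conv_a (n : ℕ) : ∑ k ∈ range (n + 1), a k * a (n - k) = 4 ^ n := by
  induction n with
  | zero => simp [a_zero]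
  | succ n ih =>
    have hstep : ((n : ℝ) + 1) * ∑ k ∈ range (n + 2), a k * a (n + 1 - k)
        = 4 * ((n : ℝ) + 1) * 4 ^ n := by
      have hA := double_weighted (n + 1)
      push_cast at hA
      -- T1 = ∑ k ∈ range (n+2), k * (a k * a (n+1-k))
      have hT1 : ∑ k ∈ range (n + 2), (k : ℝ) * (a k * a (n + 1 - k))
          = 2 * ((n : ℝ) + 1) * 4 ^ n := by
        rw [Finset.sum_range_succ' (fun k => (k : ℝ) * (a k * a (n + 1 - k))) (n + 1)]
        simp only [Nat.cast_zero, zero_mul, add_zero]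
        have hterm : ∀ j ∈ range (n + 1),
            ((j + 1 : ℕ) : ℝ) * (a (j + 1) * a (n + 1 - (j + 1)))
              = 2 * (2 * (j : ℝ) + 1) * (a j * a (n - j)) := by
          intro j _
          push_cast
          rw [← mul_assoc, a_rec j, mul_assoc]
        rw [Finset.sum_congr rfl hterm]
        have hexp : ∀ j ∈ range (n + 1),
            2 * (2 * (j : ℝ) + 1) * (a j * a (n - j))
              = 4 * ((j : ℝ) * (a j * a (n - j))) + 2 * (a j * a (n - j)) := by
          intro j _; ring
        rw [Finset.sum_congr rfl hexp, Finset.sum_add_distrib, ← Finset.mul_sum,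
          ← Finset.mul_sum]
        have hB := double_weighted n
        rw [ih] at hB ⊢
        nlinarith [hB]
      rw [hT1] at hA
      linarith [hA]
    have hpos : ((n : ℝ) + 1) ≠ 0 := by
      have : (0:ℝ) < (n : ℝ) + 1 := by positivity
      linarith
    have := mul_left_cancel₀ hpos (by rw [hstep]; ring :
      ((n : ℝ) + 1) * ∑ k ∈ range (n + 2), a k * a (n + 1 - k)
        = ((n : ℝ) + 1) * (4 ^ (n + 1)))
    simpa using this

lemma c_eq (n : ℕ) : invSqrtCoeff n = a n / 4 ^ n := by
  simp [invSqrtCoeff, a, Nat.centralBinom]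

lemma c_nonneg (n : ℕ) : 0 ≤ invSqrtCoeff n := by
  rw [c_eq]
  exact div_nonneg (a_nonneg n) (by positivity)

lemma a_le (n : ℕ) : a n ≤ 4 ^ n := by
  have h := conv_a n
  have : a n * a (n - n) ≤ ∑ k ∈ range (n + 1), a k * a (n - k) :=
    Finset.single_le_sum (f := fun k => a k * a (n - k))
      (fun k _ => mul_nonneg (a_nonneg _) (a_nonneg _))
      (Finset.self_mem_range_succ n)
  rw [h] at this
  simpa [a_zero] using this

lemma c_le_one (n : ℕ) : invSqrtCoeff n ≤ 1 := by
  rw [c_eq, div_le_one (by positivity)]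
  exact a_le n

lemma c_zero : invSqrtCoeff 0 = 1 := by simp [invSqrtCoeff]

lemma conv_c (n : ℕ) :
    ∑ k ∈ range (n + 1), invSqrtCoeff k * invSqrtCoeff (n - k) = 1 := by
  have h : ∀ k ∈ range (n + 1),
      invSqrtCoeff k * invSqrtCoeff (n - k) = a k * a (n - k) / 4 ^ n := by
    intro k hk
    have hk' : k ≤ n := by have := Finset.mem_range.1 hk; omega
    rw [c_eq, c_eq, div_mul_div_comm, ← pow_add]
    congr 2
    omega
  rw [Finset.sum_congr rfl h, ← Finset.sum_div, conv_a]
  field_simp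

section Algebra

variable {𝔸 : Type*} [NormedRing 𝔸] [NormedAlgebra ℝ 𝔸]

lemma summable_norm_c_smul (x : 𝔸) (hx : ‖x‖ < 1) :
    Summable (fun n => ‖invSqrtCoeff n • x ^ n‖) := by
  set C : ℝ := max ‖(1 : 𝔸)‖ 1 with hC
  have hC1 : 1 ≤ C := le_max_right _ _
  refine Summable.of_nonneg_of_le (fun n => norm_nonneg _) (fun n => ?_)
    ((summable_geometric_of_lt_one (norm_nonneg x) hx).mul_left C)
  rw [norm_smul, Real.norm_eq_abs, abs_of_nonneg (c_nonneg n)]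
  cases n with
  | zero =>
    simp only [pow_zero, c_zero, one_mul, mul_one]
    exact le_max_left _ _
  | succ m =>
    calc invSqrtCoeff (m + 1) * ‖x ^ (m + 1)‖
        ≤ 1 * ‖x‖ ^ (m + 1) :=
          mul_le_mul (c_le_one _) (norm_pow_le' x (Nat.succ_pos m)) (norm_nonneg _)
            zero_le_one
      _ ≤ C * ‖x‖ ^ (m + 1) := by
          have : (0 : ℝ) ≤ ‖x‖ ^ (m + 1) := by positivity
          nlinarith

lemma square [CompleteSpace 𝔸] (x : 𝔸) (hx : ‖x‖ < 1) :
    (∑' n, invSqrtCoeff n • x ^ n) * (∑' n, invSqrtCoeff n • x ^ n)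
      = ∑' n : ℕ, x ^ n := by
  rw [tsum_mul_tsum_eq_tsum_sum_antidiagonal_of_summable_norm
    (summable_norm_c_smul x hx) (summable_norm_c_smul x hx)]
  refine tsum_congr fun n => ?_
  rw [Finset.Nat.sum_antidiagonal_eq_sum_range_succ_mk]
  have h : ∀ k ∈ range (n + 1),
      (invSqrtCoeff k • x ^ k) * (invSqrtCoeff (n - k) • x ^ (n - k))
        = (invSqrtCoeff k * invSqrtCoeff (n - k)) • x ^ n := by
    intro k hk
    have hk' : k ≤ n := by have := Finset.mem_range.1 hk; omega
    rw [smul_mul_assoc, mul_smul_comm, smul_smul, ← pow_add]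
    congr 2
    omega
  rw [Finset.sum_congr rfl h, ← Finset.sum_smul, conv_c, one_smul]

end Algebra

lemma real_val {x : ℝ} (h0 : 0 ≤ x) (h1 : x < 1) :
    (∑' n : ℕ, invSqrtCoeff n * x ^ n) = (1 - x) ^ (-(1 / 2) : ℝ) := by
  have hx : ‖x‖ < 1 := by rwa [Real.norm_of_nonneg h0]
  set T := ∑' n : ℕ, invSqrtCoeff n * x ^ n with hT
  have hsq : T * T = (1 - x)⁻¹ := by
    have h2 := square (𝔸 := ℝ) x hx
    simp only [smul_eq_mul] at h2
    rw [hT, h2, tsum_geometric_of_lt_one h0 h1]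
  have hsum : Summable (fun n => invSqrtCoeff n * x ^ n) := by
    have := summable_norm_c_smul (𝔸 := ℝ) x hx
    exact this.of_norm_bounded (fun n => by simp [norm_smul])
  have hT1 : (1 : ℝ) ≤ T := by
    have := Summable.le_tsum hsum 0 (fun i _ => mul_nonneg (c_nonneg i) (pow_nonneg h0 i))
    simpa [c_zero] using this
  have h1x : (0 : ℝ) < 1 - x := by linarith
  have hTs : T = Real.sqrt ((1 - x)⁻¹) := by
    rw [← hsq, Real.sqrt_mul_self (by linarith)]
  rw [hTs, Real.sqrt_inv, Real.rpow_neg h1x.le]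
  congr 1
  exact Real.sqrt_eq_rpow (1 - x)

end StmtAux

set_option maxHeartbeats 1000000 in
theorem stmt_11 (𝔸 : Type*) [NormedRing 𝔸] [NormedAlgebra ℝ 𝔸] [CompleteSpace 𝔸]
    (A : 𝔸) (r : 𝔸) (hr : r = A * A + 1) (hrn : ‖r‖ < 1)
    (f : 𝔸) (hf : f = A * ((∑' n : ℕ, invSqrtCoeff n • r ^ n) - 1)) :
    (A + f) * (A + f) = -1 ∧ ‖f‖ ≤ ‖A‖ * ((1 - ‖r‖) ^ (-(1 / 2) : ℝ) - 1) := by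
  have hAr : Commute A r := by
    rw [hr]
    exact ((Commute.refl A).mul_right (Commute.refl A)).add_right (Commute.one_right A)
  set S : 𝔸 := ∑' n : ℕ, invSqrtCoeff n • r ^ n with hS
  have hnorm := StmtAux.summable_norm_c_smul (𝔸 := 𝔸) r hrn
  have hsum : Summable (fun n : ℕ => invSqrtCoeff n • r ^ n) := hnorm.of_norm
  have hAS : Commute A S := by
    rw [hS]
    exact Commute.tsum_right A (fun n => (hAr.pow_right n).smul_right _)
  have hAf : A + f = A * S := by
    rw [hf]
    noncomm_ring
  constructor
  · rw [hAf]
    have h1 : A * S * (A * S) = (A * A) * (S * S) := by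
      rw [mul_assoc, ← mul_assoc S A S, ← hAS.eq, mul_assoc, ← mul_assoc, ← mul_assoc]
    have hAA : A * A = -(1 - r) := by
      rw [hr]; noncomm_ring
    rw [h1, hS, StmtAux.square r hrn, hAA, neg_mul, mul_neg_geom_series r hrn]
  · have hTsum : Summable (fun n : ℕ => invSqrtCoeff n * ‖r‖ ^ n) := by
      have h := StmtAux.summable_norm_c_smul (𝔸 := ℝ) ‖r‖
        (by rwa [Real.norm_of_nonneg (norm_nonneg r)])
      exact h.of_norm_bounded (fun n => by simp [norm_smul])
    set T : ℝ := ∑' n : ℕ, invSqrtCoeff n * ‖r‖ ^ n with hT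
    have htail𝔸 : Summable (fun n : ℕ => ‖invSqrtCoeff (n + 1) • r ^ (n + 1)‖) :=
      (_root_.summable_nat_add_iff 1).2 hnorm
    have hS1 : S - 1 = ∑' n : ℕ, invSqrtCoeff (n + 1) • r ^ (n + 1) := by
      have h0 := Summable.sum_add_tsum_nat_add (f := fun n : ℕ => invSqrtCoeff n • r ^ n) 1 hsum
      rw [hS, ← h0]
      simp [StmtAux.c_zero]
    have hT1 : T - 1 = ∑' n : ℕ, invSqrtCoeff (n + 1) * ‖r‖ ^ (n + 1) := by
      have h0 := Summable.sum_add_tsum_nat_add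
        (f := fun n : ℕ => invSqrtCoeff n * ‖r‖ ^ n) 1 hTsum
      rw [hT, ← h0]
      simp [StmtAux.c_zero]
    have hbound : ‖S - 1‖ ≤ T - 1 := by
      rw [hS1, hT1]
      refine le_trans (norm_tsum_le_tsum_norm htail𝔸)
        (Summable.tsum_le_tsum ?_ htail𝔸 ((_root_.summable_nat_add_iff 1).2 hTsum))
      intro n
      rw [norm_smul, Real.norm_eq_abs, abs_of_nonneg (StmtAux.c_nonneg _)]
      exact mul_le_mul_of_nonneg_left (norm_pow_le' r (Nat.succ_pos n))
        (StmtAux.c_nonneg _)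
    have hTval : T = (1 - ‖r‖) ^ (-(1 / 2) : ℝ) :=
      StmtAux.real_val (norm_nonneg r) hrn
    calc ‖f‖ = ‖A * (S - 1)‖ := by rw [hf]
      _ ≤ ‖A‖ * ‖S - 1‖ := norm_mul_le _ _
      _ ≤ ‖A‖ * (T - 1) := mul_le_mul_of_nonneg_left hbound (norm_nonneg A)
      _ = ‖A‖ * ((1 - ‖r‖) ^ (-(1 / 2) : ℝ) - 1) := by rw [hTval]
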